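/- Let K, K̂ ∈ R^{m×m} be symmetric, with eigenvalues λ₁ ≥ ... ≥ λ_m of K. Let V, V̂ ∈ R^{m×r} be matrices of top-r orthonormal eigenvectors of K and K̂ respectively. Then ||VVᵀ − V̂V̂ᵀ||_F ≤ 2√2 ||K − K̂||_F / (λ_r − λ_{r+1}), assuming λ_r > λ_{r+1}. -/

import Mathlib

open Matrix

/-- Frobenius norm of a matrix. -/
noncomputable def frobNorm {m n : ℕ} (A : Matrix (Fin m) (Fin n) ℝ) : ℝ :=
  Real.sqrt (Matrix.trace (Aᵀ * A))

private lemma traceT_eq_sum {m n : ℕ} (C D : Matrix (Fin m) (Fin n) ℝ) :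
    Matrix.trace (Cᵀ * D) = ∑ p : Fin m × Fin n, C p.1 p.2 * D p.1 p.2 := by
  rw [Fintype.sum_prod_type]
  simp only [Matrix.trace, Matrix.diag, Matrix.mul_apply, Matrix.transpose_apply]
  exact Finset.sum_comm

private lemma traceT_nonneg {m n : ℕ} (A : Matrix (Fin m) (Fin n) ℝ) :
    0 ≤ Matrix.trace (Aᵀ * A) := by
  rw [traceT_eq_sum]
  exact Finset.sum_nonneg fun p _ => mul_self_nonneg _

private lemma frobNorm_nonneg {m n : ℕ} (A : Matrix (Fin m) (Fin n) ℝ) : 0 ≤ frobNorm A :=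
  Real.sqrt_nonneg _

private lemma frobNorm_sq {m n : ℕ} (A : Matrix (Fin m) (Fin n) ℝ) :
    frobNorm A ^ 2 = Matrix.trace (Aᵀ * A) :=
  Real.sq_sqrt (traceT_nonneg A)

/-- Cauchy–Schwarz for the Frobenius inner product. -/
private lemma trace_le_frob {m n : ℕ} (A B : Matrix (Fin m) (Fin n) ℝ) :
    Matrix.trace (Aᵀ * B) ≤ frobNorm A * frobNorm B := by
  rw [traceT_eq_sum, frobNorm, frobNorm, traceT_eq_sum, traceT_eq_sum]
  have := Real.sum_mul_le_sqrt_mul_sqrt Finset.univ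
    (fun p : Fin m × Fin n => A p.1 p.2) (fun p => B p.1 p.2)
  simpa [sq] using this

private lemma diag_tt_nonneg {m n : ℕ} (B : Matrix (Fin m) (Fin n) ℝ) (i : Fin n) :
    0 ≤ (Bᵀ * B) i i := by
  rw [Matrix.mul_apply]
  exact Finset.sum_nonneg fun k _ => mul_self_nonneg _

private lemma trace_diag_mul {m : ℕ} (d : Fin m → ℝ) (N : Matrix (Fin m) (Fin m) ℝ) :
    Matrix.trace (Matrix.diagonal d * N) = ∑ i, d i * N i i := by
  simp [Matrix.trace, Matrix.diag, Matrix.diagonal_mul]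

private lemma sum_ind {m r : ℕ} (hrm : r ≤ m) (w : Fin m → ℝ) :
    ∑ i : Fin m, (if (i : ℕ) < r then w i else 0)
      = ∑ j : Fin r, w (Fin.castLE hrm j) := by
  set F : ℕ → ℝ := fun n => if h : n < r then w ⟨n, lt_of_lt_of_le h hrm⟩ else 0 with hF
  have h1 : ∑ i : Fin m, (if (i : ℕ) < r then w i else 0) = ∑ i : Fin m, F i.val := by
    refine Finset.sum_congr rfl fun i _ => ?_
    by_cases h : (i : ℕ) < r
    · rw [if_pos h, hF]; simp only [dif_pos h]
    · rw [if_neg h, hF]; simp only [dif_neg h]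
  have h2 : ∑ j : Fin r, w (Fin.castLE hrm j) = ∑ j : Fin r, F j.val := by
    refine Finset.sum_congr rfl fun j _ => ?_
    rw [hF]; simp only [dif_pos j.isLt]
    congr 1
  rw [h1, h2, Fin.sum_univ_eq_sum_range F m, Fin.sum_univ_eq_sum_range F r]
  refine (Finset.sum_subset (Finset.range_subset_range.mpr hrm) fun n _ hn => ?_).symm
  rw [Finset.mem_range, not_lt] at hn
  rw [hF]; simp only [dif_neg (not_lt.mpr hn)]

private lemma sum_ind_one {m r : ℕ} (hrm : r ≤ m) :
    ∑ i : Fin m, (if (i : ℕ) < r then (1:ℝ) else 0) = r := by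
  rw [sum_ind hrm (fun _ => (1:ℝ))]; simp

/-- Pure arithmetic core. -/
private lemma sum_key (m r : ℕ) (hr1 : 1 ≤ r) (hr : r < m)
    (lam w : Fin m → ℝ)
    (hdec : ∀ i j : Fin m, i ≤ j → lam j ≤ lam i)
    (hw0 : ∀ i, 0 ≤ w i) (hw1 : ∀ i, w i ≤ 1)
    (hsum : ∑ i, w i = r) :
    (lam ⟨r - 1, Nat.lt_of_le_of_lt (Nat.sub_le r 1) hr⟩ - lam ⟨r, hr⟩) *
        ((r : ℝ) - ∑ i : Fin m, (if (i : ℕ) < r then w i else 0))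
      ≤ ∑ i : Fin m, lam i * ((if (i : ℕ) < r then 1 else 0) - w i) := by
  have hrm : r ≤ m := hr.le
  set a := lam ⟨r - 1, Nat.lt_of_le_of_lt (Nat.sub_le r 1) hr⟩ with ha
  set b := lam ⟨r, hr⟩ with hb
  have hterm : ∀ i : Fin m,
      (if (i : ℕ) < r then a * (1 - w i) else -(b * w i))
        ≤ lam i * ((if (i : ℕ) < r then 1 else 0) - w i) := by
    intro i
    by_cases h : (i : ℕ) < r
    · rw [if_pos h, if_pos h]
      have hla : a ≤ lam i := hdec i ⟨r - 1, Nat.lt_of_le_of_lt (Nat.sub_le r 1) hr⟩ (Fin.le_def.mpr (show (i : ℕ) ≤ r - 1 by omega))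
      have := hw1 i
      nlinarith
    · rw [if_neg h, if_neg h]
      have hlb : lam i ≤ b := hdec ⟨r, hr⟩ i (Fin.le_def.mpr (show r ≤ (i : ℕ) by omega))
      have := hw0 i
      nlinarith
  have hsum2 := Finset.sum_le_sum (fun i (_ : i ∈ Finset.univ) => hterm i)
  refine le_trans (le_of_eq ?_) hsum2
  have hrw : ∀ i : Fin m,
      (if (i : ℕ) < r then a * (1 - w i) else -(b * w i))
        = a * (if (i : ℕ) < r then (1:ℝ) else 0)
          - a * (if (i : ℕ) < r then w i else 0)
          - b * (w i - (if (i : ℕ) < r then w i else 0)) := by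
    intro i; by_cases h : (i : ℕ) < r
    · rw [if_pos h, if_pos h, if_pos h]; ring
    · rw [if_neg h, if_neg h, if_neg h]; ring
  rw [Finset.sum_congr rfl (fun i _ => hrw i)]
  rw [Finset.sum_sub_distrib, Finset.sum_sub_distrib, ← Finset.mul_sum, ← Finset.mul_sum,
    ← Finset.mul_sum, Finset.sum_sub_distrib, sum_ind_one hrm, hsum]
  ring

/-- Key spectral lemma. -/
private lemma keylem (m r : ℕ) (hr1 : 1 ≤ r) (hr : r < m)
    (lam : Fin m → ℝ) (U : Matrix (Fin m) (Fin m) ℝ) (hU : Uᵀ * U = 1)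
    (hdec : ∀ i j : Fin m, i ≤ j → lam j ≤ lam i)
    (V Vh : Matrix (Fin m) (Fin r) ℝ)
    (hVdef : V = Matrix.of fun i j => U i (Fin.castLE hr.le j))
    (hVh : Vhᵀ * Vh = 1) :
    (lam ⟨r - 1, Nat.lt_of_le_of_lt (Nat.sub_le r 1) hr⟩ - lam ⟨r, hr⟩) *
        ((r : ℝ) - Matrix.trace ((V * Vᵀ) * (Vh * Vhᵀ)))
      ≤ Matrix.trace ((U * Matrix.diagonal lam * Uᵀ) * (V * Vᵀ - Vh * Vhᵀ)) := by
  have hrm : r ≤ m := hr.le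
  have hUU : U * Uᵀ = 1 := mul_eq_one_comm.mp hU
  set P := V * Vᵀ with hPdef
  set Ph := Vh * Vhᵀ with hPhdef
  have hPhsymm : Phᵀ = Ph := by rw [hPhdef]; simp [Matrix.transpose_mul]
  have hPhPh : Ph * Ph = Ph := by
    rw [hPhdef]
    conv_lhs => rw [Matrix.mul_assoc, ← Matrix.mul_assoc Vhᵀ Vh Vhᵀ, hVh, Matrix.one_mul]
  -- nonnegativity of diagonal entries of Uᵀ Ph U
  have hNpos : ∀ i, 0 ≤ (Uᵀ * Ph * U) i i := by
    intro i
    have hNe : Uᵀ * Ph * U = (Vhᵀ * U)ᵀ * (Vhᵀ * U) := by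
      rw [Matrix.transpose_mul, Matrix.transpose_transpose, hPhdef]
      simp only [Matrix.mul_assoc]
    rw [hNe]
    exact diag_tt_nonneg _ i
  have hNle : ∀ i, (Uᵀ * Ph * U) i i ≤ 1 := by
    intro i
    have h1 : (1 - Ph)ᵀ * (1 - Ph) = 1 - Ph := by
      have hx : (1 - Ph) * (1 - Ph) = 1 - Ph - Ph + Ph * Ph := by noncomm_ring
      rw [Matrix.transpose_sub, Matrix.transpose_one, hPhsymm, hx, hPhPh]
      abel
    have h2 : 0 ≤ (Uᵀ * (1 - Ph) * U) i i := by
      have hNe : Uᵀ * (1 - Ph) * U = ((1 - Ph) * U)ᵀ * ((1 - Ph) * U) := by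
        rw [Matrix.transpose_mul]
        calc Uᵀ * (1 - Ph) * U = Uᵀ * ((1 - Ph)ᵀ * (1 - Ph)) * U := by rw [h1]
          _ = Uᵀ * (1 - Ph)ᵀ * ((1 - Ph) * U) := by simp only [Matrix.mul_assoc]
      rw [hNe]
      exact diag_tt_nonneg _ i
    have h3 : Uᵀ * (1 - Ph) * U = 1 - Uᵀ * Ph * U := by
      rw [Matrix.mul_sub, Matrix.mul_one, Matrix.sub_mul, hU]
    rw [h3, Matrix.sub_apply, Matrix.one_apply_eq] at h2
    linarith
  have hNsum : ∑ i, (Uᵀ * Ph * U) i i = (r : ℝ) := by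
    have h0 : ∑ i, (Uᵀ * Ph * U) i i = Matrix.trace (Uᵀ * Ph * U) := rfl
    rw [h0, Matrix.trace_mul_cycle, ← Matrix.mul_assoc, hUU, Matrix.one_mul]
    try rw [hPhdef]
    rw [Matrix.trace_mul_comm, hVh, Matrix.trace_one]
    simp
  -- Uᵀ V entries
  have hUV : ∀ (i : Fin m) (j : Fin r),
      (Uᵀ * V) i j = if (i : ℕ) = (j : ℕ) then 1 else 0 := by
    intro i j
    have h1 : (Uᵀ * V) i j = (Uᵀ * U) i (Fin.castLE hrm j) := by
      simp [Matrix.mul_apply, hVdef]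
    rw [h1, hU, Matrix.one_apply]
    simp [Fin.ext_iff]
  -- Uᵀ P U is the indicator diagonal
  have hM : Uᵀ * P * U = Matrix.diagonal (fun i : Fin m => if (i : ℕ) < r then (1:ℝ) else 0) := by
    have hMe : Uᵀ * P * U = (Uᵀ * V) * (Uᵀ * V)ᵀ := by
      rw [Matrix.transpose_mul, Matrix.transpose_transpose, hPdef]
      simp only [Matrix.mul_assoc]
    rw [hMe]
    ext i i'
    rw [Matrix.mul_apply]
    simp only [Matrix.transpose_apply, hUV]
    by_cases h : (i : ℕ) < r
    · rw [Finset.sum_eq_single (⟨(i : ℕ), h⟩ : Fin r)]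
      · simp only [Matrix.diagonal_apply]
        by_cases hii : i = i'
        · subst hii; simp [h]
        · have h2 : ¬ ((i' : ℕ) = (i : ℕ)) := fun hc => hii (Fin.ext hc.symm)
          simp [hii, h2]
      · intro j _ hj
        have : ¬ ((i : ℕ) = (j : ℕ)) := fun hc => hj (Fin.ext hc.symm)
        rw [if_neg this, zero_mul]
      · intro hmem; exact absurd (Finset.mem_univ _) hmem
    · have hz : (∑ j : Fin r, (if (i : ℕ) = (j : ℕ) then (1:ℝ) else 0)
          * (if (i' : ℕ) = (j : ℕ) then 1 else 0)) = 0 := by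
        refine Finset.sum_eq_zero fun j _ => ?_
        have hne : ¬ ((i : ℕ) = (j : ℕ)) := fun hc => h (hc ▸ j.isLt)
        rw [if_neg hne, zero_mul]
      rw [hz, Matrix.diagonal_apply]
      by_cases hii : i = i'
      · subst hii; simp [h]
      · simp [hii]
  -- trace of K(P - Ph) as a sum
  have hTK : Matrix.trace ((U * Matrix.diagonal lam * Uᵀ) * (P - Ph))
      = ∑ i : Fin m, lam i * ((if (i : ℕ) < r then 1 else 0) - (Uᵀ * Ph * U) i i) := by
    have h1 : (U * Matrix.diagonal lam * Uᵀ) * (P - Ph)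
        = U * (Matrix.diagonal lam * (Uᵀ * (P - Ph))) := by
      simp only [Matrix.mul_assoc]
    have h2 : (Matrix.diagonal lam * (Uᵀ * (P - Ph))) * U
        = Matrix.diagonal lam * (Uᵀ * (P - Ph) * U) := by
      simp only [Matrix.mul_assoc]
    rw [h1, Matrix.trace_mul_comm, h2, trace_diag_mul]
    have h3 : Uᵀ * (P - Ph) * U = Uᵀ * P * U - Uᵀ * Ph * U := by
      rw [Matrix.mul_sub, Matrix.sub_mul]
    rw [h3]
    refine Finset.sum_congr rfl fun i _ => ?_
    rw [Matrix.sub_apply, hM, Matrix.diagonal_apply_eq]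
  -- trace of P Ph as a sum
  have hTP : Matrix.trace (P * Ph)
      = ∑ i : Fin m, (if (i : ℕ) < r then (Uᵀ * Ph * U) i i else 0) := by
    have h0 : P * Ph = U * ((Uᵀ * P * U) * (Uᵀ * Ph * U)) * Uᵀ := by
      have he : U * ((Uᵀ * P * U) * (Uᵀ * Ph * U)) * Uᵀ
          = (U * Uᵀ) * (P * ((U * Uᵀ) * (Ph * (U * Uᵀ)))) := by
        simp only [Matrix.mul_assoc]
      rw [he, hUU, Matrix.one_mul, Matrix.one_mul, Matrix.mul_one]
    rw [h0, Matrix.trace_mul_cycle, ← Matrix.mul_assoc, hU, Matrix.one_mul, hM,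
      trace_diag_mul]
    refine Finset.sum_congr rfl fun i _ => ?_
    by_cases h : (i : ℕ) < r
    · rw [if_pos h, if_pos h, one_mul]
    · rw [if_neg h, if_neg h, zero_mul]
  rw [hTK, hTP]
  exact sum_key m r hr1 hr lam (fun i => (Uᵀ * Ph * U) i i) hdec hNpos hNle hNsum

/-- Davis–Kahan sin(Θ) theorem (Yu–Wang–Samworth variant): with K, K̂
symmetric, eigenvalues λ₁ ≥ ⋯ ≥ λ_m of K, and V, V̂ the top-r orthonormal eigenvector
matrices of K and K̂, if λ_r > λ_{r+1} then
‖VVᵀ − V̂V̂ᵀ‖_F ≤ 2√2 ‖K − K̂‖_F / (λ_r − λ_{r+1}). -/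
theorem stmt12 (m r : ℕ) (hr1 : 1 ≤ r) (hr : r < m)
    (K Khat : Matrix (Fin m) (Fin m) ℝ) (hKsymm : K.IsSymm) (hKhatsymm : Khat.IsSymm)
    (lam lamhat : Fin m → ℝ) (Vfull Vhatfull : Matrix (Fin m) (Fin m) ℝ)
    (hVorth : Vfullᵀ * Vfull = 1) (hVhatorth : Vhatfullᵀ * Vhatfull = 1)
    (hlamdec : ∀ i j : Fin m, i ≤ j → lam j ≤ lam i)
    (hlamhatdec : ∀ i j : Fin m, i ≤ j → lamhat j ≤ lamhat i)
    (hKdecomp : K = Vfull * Matrix.diagonal lam * Vfullᵀ)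
    (hKhatdecomp : Khat = Vhatfull * Matrix.diagonal lamhat * Vhatfullᵀ)
    (hgap : lam ⟨r, hr⟩ < lam ⟨r - 1, by omega⟩)
    (V Vhat : Matrix (Fin m) (Fin r) ℝ)
    (hV : V = Matrix.of fun i j => Vfull i (Fin.castLE hr.le j))
    (hVhat : Vhat = Matrix.of fun i j => Vhatfull i (Fin.castLE hr.le j)) :
    frobNorm (V * Vᵀ - Vhat * Vhatᵀ)
      ≤ 2 * Real.sqrt 2 * frobNorm (K - Khat)
          / (lam ⟨r - 1, by omega⟩ - lam ⟨r, hr⟩) := by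
  have hVo : Vᵀ * V = (1 : Matrix (Fin r) (Fin r) ℝ) := by
    ext j k
    have h : (Vᵀ * V) j k = (Vfullᵀ * Vfull) (Fin.castLE hr.le j) (Fin.castLE hr.le k) := by
      simp [Matrix.mul_apply, hV]
    rw [h, hVorth]
    simp [Matrix.one_apply, Fin.castLE_inj]
  have hVho : Vhatᵀ * Vhat = (1 : Matrix (Fin r) (Fin r) ℝ) := by
    ext j k
    have h : (Vhatᵀ * Vhat) j k
        = (Vhatfullᵀ * Vhatfull) (Fin.castLE hr.le j) (Fin.castLE hr.le k) := by
      simp [Matrix.mul_apply, hVhat]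
    rw [h, hVhatorth]
    simp [Matrix.one_apply, Fin.castLE_inj]
  set P := V * Vᵀ with hP
  set Ph := Vhat * Vhatᵀ with hPh
  set D := P - Ph with hD
  set a := lam ⟨r - 1, by omega⟩ with ha
  set b := lam ⟨r, hr⟩ with hb
  have hgap' : (0:ℝ) < a - b := sub_pos.mpr hgap
  have hPP : P * P = P := by
    rw [hP]
    conv_lhs => rw [Matrix.mul_assoc, ← Matrix.mul_assoc Vᵀ V Vᵀ, hVo, Matrix.one_mul]
  have hPhPh : Ph * Ph = Ph := by
    rw [hPh]
    conv_lhs => rw [Matrix.mul_assoc, ← Matrix.mul_assoc Vhatᵀ Vhat Vhatᵀ, hVho, Matrix.one_mul]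
  have htrP : Matrix.trace P = (r:ℝ) := by
    rw [hP, Matrix.trace_mul_comm, hVo, Matrix.trace_one]; simp
  have htrPh : Matrix.trace Ph = (r:ℝ) := by
    rw [hPh, Matrix.trace_mul_comm, hVho, Matrix.trace_one]; simp
  have hPsymm : Pᵀ = P := by rw [hP]; simp [Matrix.transpose_mul]
  have hPhsymm : Phᵀ = Ph := by rw [hPh]; simp [Matrix.transpose_mul]
  have hDsymm : Dᵀ = D := by rw [hD, Matrix.transpose_sub, hPsymm, hPhsymm]
  have hDD : Matrix.trace (Dᵀ * D) = 2 * ((r:ℝ) - Matrix.trace (P * Ph)) := by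
    rw [hDsymm, hD, Matrix.sub_mul, Matrix.mul_sub, Matrix.mul_sub, Matrix.trace_sub,
      Matrix.trace_sub, Matrix.trace_sub, hPP, hPhPh, htrP, htrPh,
      Matrix.trace_mul_comm Ph P]
    ring
  have hDDnn : 0 ≤ Matrix.trace (Dᵀ * D) := traceT_nonneg D
  have hS : 0 ≤ (r:ℝ) - Matrix.trace (P * Ph) := by
    rw [hDD] at hDDnn; linarith
  have h1 : (a - b) * ((r : ℝ) - Matrix.trace (P * Ph)) ≤ Matrix.trace (K * D) := by
    rw [hKdecomp]
    exact keylem m r hr1 hr lam Vfull hVorth hlamdec V Vhat hV hVho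
  have h2 : 0 ≤ Matrix.trace (Khat * (Ph - P)) := by
    have h2' := keylem m r hr1 hr lamhat Vhatfull hVhatorth hlamhatdec Vhat V hVhat hVo
    rw [← hKhatdecomp] at h2'
    have hgap2 : 0 ≤ lamhat ⟨r - 1, by omega⟩ - lamhat ⟨r, hr⟩ := by
      have := hlamhatdec ⟨r - 1, by omega⟩ ⟨r, hr⟩ (Fin.le_def.mpr (show r - 1 ≤ r by omega))
      linarith
    have htr2 : Matrix.trace (Ph * P) = Matrix.trace (P * Ph) := Matrix.trace_mul_comm _ _
    calc (0:ℝ) ≤ (lamhat ⟨r - 1, by omega⟩ - lamhat ⟨r, hr⟩)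
          * ((r : ℝ) - Matrix.trace (Ph * P)) := by
          rw [htr2]; exact mul_nonneg hgap2 hS
      _ ≤ _ := h2'
  have e1 : Matrix.trace ((K - Khat) * D)
      = Matrix.trace (K * D) - Matrix.trace (Khat * D) := by
    rw [Matrix.sub_mul, Matrix.trace_sub]
  have e2 : Matrix.trace (Khat * (Ph - P)) = - Matrix.trace (Khat * D) := by
    rw [hD, Matrix.mul_sub, Matrix.mul_sub, Matrix.trace_sub, Matrix.trace_sub]
    ring
  have h3 : (a - b) * ((r : ℝ) - Matrix.trace (P * Ph))
      ≤ Matrix.trace ((K - Khat) * D) := by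
    rw [e2] at h2; rw [e1]; linarith
  have hCS : Matrix.trace ((K - Khat) * D) ≤ frobNorm (K - Khat) * frobNorm D := by
    have hKs : (K - Khat)ᵀ = K - Khat := by
      rw [Matrix.transpose_sub]
      rw [Matrix.IsSymm] at hKsymm hKhatsymm
      rw [hKsymm, hKhatsymm]
    have := trace_le_frob (K - Khat) D
    rwa [hKs] at this
  have hkey : (a - b) / 2 * (frobNorm D)^2 ≤ frobNorm (K - Khat) * frobNorm D := by
    rw [frobNorm_sq, hDD]
    calc (a - b) / 2 * (2 * ((r:ℝ) - Matrix.trace (P * Ph)))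
        = (a - b) * ((r:ℝ) - Matrix.trace (P * Ph)) := by ring
      _ ≤ Matrix.trace ((K - Khat) * D) := h3
      _ ≤ _ := hCS
  have hDnn := frobNorm_nonneg D
  have hKnn := frobNorm_nonneg (K - Khat)
  have hs2 : (1:ℝ) ≤ Real.sqrt 2 := by
    nlinarith [Real.sq_sqrt (by norm_num : (0:ℝ) ≤ 2), Real.sqrt_nonneg 2]
  rw [le_div_iff₀ hgap']
  rcases eq_or_lt_of_le hDnn with h0 | h0
  · rw [← h0, zero_mul]
    positivity
  · nlinarith [mul_nonneg hKnn (sub_nonneg.mpr hs2)]
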